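/- Let s be an odd prime power. Consider the 3 × 2s matrix over GF(s) whose columns are (1, ω_i, ω_i²)^T and (1, ω_i, ω + ω_i²)^T for all ω_i ∈ GF(s), where ω ∈ GF(s) is a fixed nonzero element. Then any two columns of this matrix are linearly independent over GF(s); hence the regular array generated by it is an OA(s³, 2s, s, 2). -/

import Mathlib

open Finset

private lemma fiber_card_aux {M N : Type*} [AddCommGroup M] [AddCommGroup N]
    [Fintype M] [Fintype N] [DecidableEq M] [DecidableEq N]
    (f : M →+ N) (hf : Function.Surjective f) (y : N) :
    (Finset.univ.filter (fun x => f x = y)).card * Fintype.card N = Fintype.card M := by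
  classical
  obtain ⟨x₀, hx₀⟩ := hf y
  have e : {x : M // f x = y} ≃ f.ker :=
    { toFun := fun x => ⟨x.1 - x₀, by
        rw [AddMonoidHom.mem_ker, map_sub, x.2, hx₀, sub_self]⟩
      invFun := fun z => ⟨z.1 + x₀, by
        rw [map_add, hx₀]
        have := z.2
        rw [AddMonoidHom.mem_ker] at this
        rw [this, zero_add]⟩
      left_inv := fun x => by simp
      right_inv := fun z => by simp }
  have h1 : (Finset.univ.filter (fun x => f x = y)).card = Fintype.card f.ker := by
    rw [← Fintype.card_subtype]
    exact Fintype.card_congr e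
  have h2 : Fintype.card N = Fintype.card (M ⧸ f.ker) :=
    (Fintype.card_congr (QuotientAddGroup.quotientKerEquivOfSurjective f hf).toEquiv).symm
  have h3 := AddSubgroup.card_eq_card_quotient_mul_card_addSubgroup f.ker
  simp only [Nat.card_eq_fintype_card] at h3
  rw [h1, h2, h3]; ring

private def GoodPair {F : Type*} [Field F] (v w : Fin 3 → F) : Prop :=
  v 0 = 1 ∧ w 0 = 1 ∧ (v 1 ≠ w 1 ∨ v 2 ≠ w 2)

private lemma good_indep {F : Type*} [Field F] {v w : Fin 3 → F}
    (h : GoodPair v w) : LinearIndependent F ![v, w] := by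
  obtain ⟨hv0, hw0, hd⟩ := h
  rw [LinearIndependent.pair_iff]
  intro s t hst
  have h0 : s * v 0 + t * w 0 = 0 := by
    have := congrFun hst 0; simpa using this
  rw [hv0, hw0, mul_one, mul_one] at h0
  have hts : t = -s := by linear_combination h0
  rcases hd with hd | hd
  · have h1 : s * v 1 + t * w 1 = 0 := by
      have := congrFun hst 1; simpa using this
    have hs : s = 0 := by
      have : s * (v 1 - w 1) = 0 := by rw [hts] at h1; linear_combination h1
      exact (mul_eq_zero.1 this).resolve_right (sub_ne_zero.2 hd)
    exact ⟨hs, by rw [hts, hs, neg_zero]⟩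
  · have h1 : s * v 2 + t * w 2 = 0 := by
      have := congrFun hst 2; simpa using this
    have hs : s = 0 := by
      have : s * (v 2 - w 2) = 0 := by rw [hts] at h1; linear_combination h1
      exact (mul_eq_zero.1 this).resolve_right (sub_ne_zero.2 hd)
    exact ⟨hs, by rw [hts, hs, neg_zero]⟩

private lemma good_surj {F : Type*} [Field F] {v w : Fin 3 → F}
    (h : GoodPair v w) (a b : F) :
    ∃ x : Fin 3 → F, (∑ i, x i * v i) = a ∧ (∑ i, x i * w i) = b := by
  obtain ⟨hv0, hw0, hd⟩ := h
  rcases hd with hd | hd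
  · have hne : v 1 - w 1 ≠ 0 := sub_ne_zero.2 hd
    refine ⟨![a - (a - b) / (v 1 - w 1) * v 1, (a - b) / (v 1 - w 1), 0], ?_, ?_⟩ <;>
      simp only [Fin.sum_univ_three, Matrix.cons_val_zero, Matrix.cons_val_one,
        Matrix.head_cons, Matrix.cons_val_two, Matrix.tail_cons, hv0, hw0] <;>
      field_simp <;> ring
  · have hne : v 2 - w 2 ≠ 0 := sub_ne_zero.2 hd
    refine ⟨![a - (a - b) / (v 2 - w 2) * v 2, 0, (a - b) / (v 2 - w 2)], ?_, ?_⟩ <;>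
      simp only [Fin.sum_univ_three, Matrix.cons_val_zero, Matrix.cons_val_one,
        Matrix.head_cons, Matrix.cons_val_two, Matrix.tail_cons, hv0, hw0] <;>
      field_simp <;> ring

/-- For s an odd prime power and ω ≠ 0 in GF(s), the 2s columns (1, t, t²) and
(1, t, ω + t²), t ∈ GF(s), are pairwise linearly independent over GF(s); hence the
regular array they generate is an OA(s³, 2s, s, 2): any two distinct columns contain
each pair of GF(s)² exactly s times. -/
theorem stmt_16 (F : Type*) [Field F] [Fintype F] [DecidableEq F]
    (hodd : Odd (Fintype.card F))
    (ω : F) (hω : ω ≠ 0)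
    (col : F ⊕ F → (Fin 3 → F))
    (hcol : ∀ t : F, col (Sum.inl t) = ![1, t, t ^ 2] ∧
      col (Sum.inr t) = ![1, t, ω + t ^ 2]) :
    (∀ c₁ c₂ : F ⊕ F, c₁ ≠ c₂ → LinearIndependent F ![col c₁, col c₂]) ∧
    (∀ c₁ c₂ : F ⊕ F, c₁ ≠ c₂ → ∀ a b : F,
      (Finset.univ.filter (fun x : Fin 3 → F =>
        (∑ i, x i * col c₁ i) = a ∧ (∑ i, x i * col c₂ i) = b)).card
          * Fintype.card F ^ 2 = Fintype.card F ^ 3) := by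
  classical
  have hgood : ∀ c₁ c₂ : F ⊕ F, c₁ ≠ c₂ → GoodPair (col c₁) (col c₂) := by
    rintro (t | t) (t' | t') hne
    · have ht := (hcol t).1; have ht' := (hcol t').1
      refine ⟨by simp [ht], by simp [ht'], Or.inl ?_⟩
      simp only [ht, ht', Matrix.cons_val_one, Matrix.head_cons]
      exact fun h => hne (by rw [show t = t' from h])
    · have ht := (hcol t).1; have ht' := (hcol t').2
      by_cases htt : t = t'
      · refine ⟨by simp [ht], by simp [ht'], Or.inr ?_⟩
        simp only [ht, ht', Matrix.cons_val_two, Matrix.tail_cons, Matrix.head_cons]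
        intro h; subst htt
        exact hω (by linear_combination -h)
      · refine ⟨by simp [ht], by simp [ht'], Or.inl ?_⟩
        simp only [ht, ht', Matrix.cons_val_one, Matrix.head_cons]
        exact htt
    · have ht := (hcol t).2; have ht' := (hcol t').1
      by_cases htt : t = t'
      · refine ⟨by simp [ht], by simp [ht'], Or.inr ?_⟩
        simp only [ht, ht', Matrix.cons_val_two, Matrix.tail_cons, Matrix.head_cons]
        intro h; subst htt
        exact hω (by linear_combination h)
      · refine ⟨by simp [ht], by simp [ht'], Or.inl ?_⟩
        simp only [ht, ht', Matrix.cons_val_one, Matrix.head_cons]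
        exact htt
    · have ht := (hcol t).2; have ht' := (hcol t').2
      refine ⟨by simp [ht], by simp [ht'], Or.inl ?_⟩
      simp only [ht, ht', Matrix.cons_val_one, Matrix.head_cons]
      exact fun h => hne (by rw [show t = t' from h])
  refine ⟨fun c₁ c₂ hne => good_indep (hgood c₁ c₂ hne), fun c₁ c₂ hne a b => ?_⟩
  set v := col c₁
  set w := col c₂
  let f : (Fin 3 → F) →+ (F × F) := AddMonoidHom.mk'
    (fun x => (∑ i, x i * v i, ∑ i, x i * w i))
    (by intro x y
        simp only [Pi.add_apply, add_mul, Finset.sum_add_distrib, Prod.mk_add_mk])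
  have hfs : Function.Surjective f := by
    rintro ⟨a, b⟩
    obtain ⟨x, hx1, hx2⟩ := good_surj (hgood c₁ c₂ hne) a b
    exact ⟨x, by simp [f, v, w, hx1, hx2]⟩
  have hfilter : (Finset.univ.filter (fun x : Fin 3 → F =>
        (∑ i, x i * v i) = a ∧ (∑ i, x i * w i) = b))
      = (Finset.univ.filter (fun x : Fin 3 → F => f x = (a, b))) := by
    ext x
    simp [f, Prod.ext_iff]
  have key := fiber_card_aux f hfs (a, b)
  have hc2 : Fintype.card (F × F) = Fintype.card F ^ 2 := by
    simp [sq]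
  have hc3 : Fintype.card (Fin 3 → F) = Fintype.card F ^ 3 := by
    simp [Fintype.card_fun]
  rw [hfilter, ← hc2, ← hc3]
  exact key
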